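/- For any connected finite simple graph G, the bandwidth of G is at most 2·bfsw_min(G) − 1, where bfsw_min(G) is the minimum over vertices v of the maximum layer size of the breadth-first layering from v. -/

import Mathlib

open SimpleGraph

/-- Number of vertices at distance exactly `i` from `v`. -/
noncomputable def layerCard {V : Type*} (G : SimpleGraph V) (v : V) (i : ℕ) : ℕ :=
  ({u : V | G.dist v u = i}).ncard

/-- BFS width of `G` from root `v`: the maximum layer size. -/
noncomputable def bfswFrom {V : Type*} (G : SimpleGraph V) (v : V) : ℕ :=
  sSup (Set.range (layerCard G v))

/-- BFS width of `G`: maximum over roots. -/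
noncomputable def bfsw {V : Type*} (G : SimpleGraph V) : ℕ :=
  sSup (Set.range (bfswFrom G))

/-- Minimum BFS width of `G`: minimum over roots. -/
noncomputable def bfswMin {V : Type*} (G : SimpleGraph V) : ℕ :=
  sInf (Set.range (bfswFrom G))

/-- Bandwidth of `G`: least `b` such that some linear layout has all edges of length `≤ b`. -/
noncomputable def bw {V : Type*} [Fintype V] (G : SimpleGraph V) : ℕ :=
  sInf { b : ℕ | ∃ f : V ≃ Fin (Fintype.card V),
    ∀ u w : V, G.Adj u w → ((f u : ℤ) - (f w : ℤ)).natAbs ≤ b }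

/-- The bandwidth of a connected graph is at most twice its minimum BFS width minus one. -/
theorem bw_le_two_bfswMin {V : Type*} [Fintype V] [Nonempty V]
    (G : SimpleGraph V) (hG : G.Connected) :
    bw G ≤ 2 * bfswMin G - 1 := by
  classical
  obtain ⟨v, hv⟩ : ∃ v, bfswFrom G v = bfswMin G :=
    Nat.sInf_mem (Set.range_nonempty (bfswFrom G))
  set w := bfswMin G with hw
  have hlayer : ∀ i, layerCard G v i ≤ w := by
    intro i
    rw [← hv]
    refine le_csSup ⟨Fintype.card V, ?_⟩ ⟨i, rfl⟩
    rintro _ ⟨j, rfl⟩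
    calc layerCard G v j ≤ (Set.univ : Set V).ncard :=
          Set.ncard_le_ncard (Set.subset_univ _) Set.finite_univ
      _ = Fintype.card V := by rw [Set.ncard_univ, Nat.card_eq_fintype_card]
  set n := Fintype.card V with hn
  have hn0 : 0 < n := Fintype.card_pos
  set g := Fintype.equivFin V with hg
  set e : V → ℕ := fun x => G.dist v x * n + (g x : ℕ) with he_def
  have hmono : ∀ x y : V, G.dist v x < G.dist v y → e x < e y := by
    intro x y hxy
    have h1 : e x < (G.dist v x + 1) * n := by
      simp only [he_def, add_one_mul]
      exact Nat.add_lt_add_left (g x).is_lt _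
    have h2 : (G.dist v x + 1) * n ≤ G.dist v y * n :=
      Nat.mul_le_mul_right n hxy
    exact lt_of_lt_of_le h1 (le_trans h2 (Nat.le_add_right _ _))
  have hdistle : ∀ x y : V, e x ≤ e y → G.dist v x ≤ G.dist v y := by
    intro x y h
    by_contra hc
    exact absurd h (not_le.2 (hmono y x (not_le.1 hc)))
  have he : Function.Injective e := by
    intro x y hxy
    have hd : G.dist v x = G.dist v y :=
      le_antisymm (hdistle x y hxy.le) (hdistle y x hxy.ge)
    have : (g x : ℕ) = (g y : ℕ) := by
      simp only [he_def, hd] at hxy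
      omega
    exact g.injective (Fin.ext this)
  letI : LinearOrder V := LinearOrder.lift' e he
  have hle : ∀ x y : V, x ≤ y ↔ e x ≤ e y := fun _ _ => Iff.rfl
  let f0 : V ≃o Fin n := (monoEquivOfFin V hn.symm).symm
  have key : ∀ u u' : V, G.Adj u u' → e u ≤ e u' →
      (f0 u' : ℕ) - (f0 u : ℕ) ≤ 2 * w - 1 := by
    intro u u' hadj heuu
    have hduu : G.dist u u' = 1 := (dist_eq_one_iff_adj).2 hadj
    have hd' : G.dist v u' ≤ G.dist v u + 1 := by
      have := hG.dist_triangle (u := v) (v := u) (w := u')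
      omega
    have hdle : G.dist v u ≤ G.dist v u' := hdistle _ _ heuu
    set T : Finset V := Finset.univ.filter
      (fun x => G.dist v x = G.dist v u ∨ G.dist v x = G.dist v u') with hT_def
    have hsub : ∀ k : Fin n, f0 u ≤ k → k ≤ f0 u' → f0.symm k ∈ T := by
      intro k h1 h2
      have hu : u ≤ f0.symm k := by
        have := f0.symm.monotone h1
        simpa using this
      have hu' : f0.symm k ≤ u' := by
        have := f0.symm.monotone h2
        simpa using this
      have d1 : G.dist v u ≤ G.dist v (f0.symm k) := hdistle _ _ ((hle _ _).1 hu)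
      have d2 : G.dist v (f0.symm k) ≤ G.dist v u' := hdistle _ _ ((hle _ _).1 hu')
      simp only [hT_def, Finset.mem_filter, Finset.mem_univ, true_and]
      omega
    have hfle : f0 u ≤ f0 u' := f0.monotone ((hle _ _).2 heuu)
    have hcard1 : (Finset.Icc (f0 u) (f0 u')).card ≤ T.card := by
      apply Finset.card_le_card_of_injOn (fun k => f0.symm k)
      · intro k hk
        rw [Finset.mem_coe, Finset.mem_Icc] at hk
        exact hsub k hk.1 hk.2
      · intro a _ b _ hab
        exact f0.symm.injective hab
    have hIcc : (Finset.Icc (f0 u) (f0 u')).card = (f0 u' : ℕ) + 1 - (f0 u : ℕ) := by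
      rw [Fin.card_Icc]
    have hfilter : ∀ i : ℕ, (Finset.univ.filter (fun x => G.dist v x = i)).card
        = layerCard G v i := by
      intro i
      rw [layerCard, Set.ncard_eq_toFinset_card']
      congr 1
      ext x
      simp
    have hT : T.card ≤ 2 * w := by
      have hsubT : T ⊆ Finset.univ.filter (fun x => G.dist v x = G.dist v u)
          ∪ Finset.univ.filter (fun x => G.dist v x = G.dist v u') := by
        intro x hx
        simp only [hT_def, Finset.mem_filter, Finset.mem_univ, true_and] at hx
        simp only [Finset.mem_union, Finset.mem_filter, Finset.mem_univ, true_and]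
        tauto
      calc T.card ≤ _ := Finset.card_le_card hsubT
        _ ≤ _ + _ := Finset.card_union_le _ _
        _ ≤ w + w := by
            rw [hfilter, hfilter]
            exact add_le_add (hlayer _) (hlayer _)
        _ = 2 * w := (two_mul w).symm
    omega
  rw [bw]
  apply Nat.sInf_le
  refine ⟨f0.toEquiv, ?_⟩
  intro u u' hadj
  rcases le_total (e u) (e u') with h | h
  · have h1 := key u u' hadj h
    have hfle : (f0 u : ℕ) ≤ (f0 u' : ℕ) := f0.monotone ((hle _ _).2 h)
    have e1 : f0.toEquiv u = f0 u := rfl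
    have e2 : f0.toEquiv u' = f0 u' := rfl
    rw [e1, e2]
    omega
  · have h1 := key u' u hadj.symm h
    have hfle : (f0 u' : ℕ) ≤ (f0 u : ℕ) := f0.monotone ((hle _ _).2 h)
    have e1 : f0.toEquiv u = f0 u := rfl
    have e2 : f0.toEquiv u' = f0 u' := rfl
    rw [e1, e2]
    omega
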